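/- Let V be a real n×n matrix, let α, b ∈ ℝ^n, and let z be a real number such that every complex eigenvalue of the matrix z·I + V has strictly positive real part. Then z·I + V is invertible, and the Laplace transform of the age-of-infection kernel a(τ) = α·exp(−τ·V)·b satisfies ∫_0^∞ e^{−zτ}·α·exp(−τ·V)·b dτ = α·(z·I + V)⁻¹·b. -/

import Mathlib

open Matrix MeasureTheory

section Stmt4Aux

open Matrix Polynomial NormedSpace


variable {n : ℕ}

attribute [local instance] Matrix.linftyOpNormedAddCommGroup Matrix.linftyOpNormedSpace
  Matrix.linftyOpNormedRing Matrix.linftyOpNormedAlgebra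

lemma exp_smul_one (c : ℂ) :
    NormedSpace.exp (c • (1 : Matrix (Fin n) (Fin n) ℂ)) =
      Complex.exp c • (1 : Matrix (Fin n) (Fin n) ℂ) := by
  erw [← Algebra.algebraMap_eq_smul_one, ← Algebra.algebraMap_eq_smul_one,
    ← map_exp (algebraMap ℂ (Matrix (Fin n) (Fin n) ℂ)) (continuous_algebraMap _ _),
    Complex.exp_eq_exp_ℂ]

-- vector map: M ↦ M *ᵥ x as continuous linear map
noncomputable def mulVecCLM (x : Fin n → ℂ) :
    Matrix (Fin n) (Fin n) ℂ →L[ℂ] (Fin n → ℂ) :=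
  LinearMap.toContinuousLinearMap
    { toFun := fun M => M *ᵥ x
      map_add' := fun M N => Matrix.add_mulVec M N x
      map_smul' := fun c M => Matrix.smul_mulVec c M x }

lemma exp_mulVec_genEig (B : Matrix (Fin n) (Fin n) ℂ) (μ : ℂ) (k : ℕ) (x : Fin n → ℂ)
    (hx : ((B - μ • 1) ^ k) *ᵥ x = 0) (t : ℝ) :
    NormedSpace.exp ((t : ℂ) • B) *ᵥ x =
      Complex.exp (t * μ) •
        ∑ j ∈ Finset.range k, ((t : ℂ) ^ j * (j.factorial : ℂ)⁻¹) • ((B - μ • 1) ^ j *ᵥ x) := by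
  set N := B - μ • 1 with hN
  have hsplit : (t : ℂ) • B = (t * μ) • (1 : Matrix (Fin n) (Fin n) ℂ) + (t : ℂ) • N := by
    rw [hN]; rw [smul_sub, smul_smul]; ring_nf; abel
  have hcomm : Commute ((t * μ) • (1 : Matrix (Fin n) (Fin n) ℂ)) ((t : ℂ) • N) :=
    (Commute.one_left _).smul_left _ |>.smul_right _
  erw [hsplit, NormedSpace.exp_add_of_commute hcomm, exp_smul_one, smul_mul_assoc, one_mul,
    Matrix.smul_mulVec]
  congr 1
  rw [NormedSpace.exp_eq_tsum (𝕂 := ℂ)]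
  have hterm : ∀ j : ℕ, (((j.factorial : ℂ))⁻¹ • ((t:ℂ) • N) ^ j) *ᵥ x
      = ((t : ℂ) ^ j * ((j.factorial : ℂ))⁻¹) • (N ^ j *ᵥ x) := by
    intro j
    rw [_root_.smul_pow, smul_smul, Matrix.smul_mulVec, mul_comm]
  calc (∑' j : ℕ, ((j.factorial : ℂ))⁻¹ • ((t:ℂ) • N) ^ j) *ᵥ x
      = ∑' j : ℕ, (((j.factorial : ℂ))⁻¹ • ((t:ℂ) • N) ^ j) *ᵥ x :=
        (mulVecCLM (n := n) x).map_tsum (NormedSpace.expSeries_summable' (𝕂 := ℂ) ((t:ℂ) • N))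
    _ = ∑ j ∈ Finset.range k, (((j.factorial : ℂ))⁻¹ • ((t:ℂ) • N) ^ j) *ᵥ x := by
        apply tsum_eq_sum
        intro j hj
        rw [Finset.mem_range, not_lt] at hj
        have hjk : N ^ j = N ^ (j - k) * N ^ k := by rw [← pow_add]; congr 1; omega
        rw [_root_.smul_pow, smul_smul, Matrix.smul_mulVec, hjk, ← Matrix.mulVec_mulVec, hx,
          Matrix.mulVec_zero, smul_zero]
    _ = ∑ j ∈ Finset.range k, ((t : ℂ) ^ j * ((j.factorial : ℂ))⁻¹) • (N ^ j *ᵥ x) :=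
        Finset.sum_congr rfl fun j _ => hterm j

lemma pow_div_factorial_le_exp {x : ℝ} (hx : 0 ≤ x) (j : ℕ) :
    x ^ j * ((j.factorial : ℝ))⁻¹ ≤ Real.exp x := by
  have h := Real.sum_le_exp_of_nonneg hx (j + 1)
  refine le_trans ?_ h
  have : x ^ j / (j.factorial : ℝ) ≤ ∑ i ∈ Finset.range (j+1), x ^ i / (i.factorial : ℝ) :=
    Finset.single_le_sum (f := fun i => x ^ i / (i.factorial : ℝ))
      (fun i _ => by positivity) (Finset.self_mem_range_succ j)
  simpa [div_eq_mul_inv] using this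

variable {n : ℕ}

lemma eval_charpoly' (M : Matrix (Fin n) (Fin n) ℂ) (r : ℂ) :
    M.charpoly.eval r = (Matrix.scalar (Fin n) r - M).det := by
  rw [Matrix.charpoly, _root_.eval_det, matPolyEquiv_charmatrix, eval_sub, eval_X, eval_C]

lemma isRoot_charpoly_of_mem_spectrum {M : Matrix (Fin n) (Fin n) ℂ} {μ : ℂ}
    (h : μ ∈ spectrum ℂ M) : M.charpoly.IsRoot μ := by
  rw [spectrum.mem_iff] at h
  rw [Polynomial.IsRoot, eval_charpoly']
  by_contra hdet
  apply h
  rw [Matrix.isUnit_iff_isUnit_det]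
  exact (isUnit_iff_ne_zero).2 hdet

lemma mem_spectrum_of_isRoot_charpoly {M : Matrix (Fin n) (Fin n) ℂ} {μ : ℂ}
    (h : M.charpoly.IsRoot μ) : μ ∈ spectrum ℂ M := by
  rw [Polynomial.IsRoot, eval_charpoly'] at h
  rw [spectrum.mem_iff]
  intro hu
  rw [Matrix.isUnit_iff_isUnit_det, isUnit_iff_ne_zero] at hu
  exact hu h

lemma decay_genEig {n : ℕ} (B : Matrix (Fin n) (Fin n) ℂ) (μ : ℂ) (k : ℕ) (x : Fin n → ℂ)
    (hx : ((B - μ • 1) ^ k) *ᵥ x = 0) {ε : ℝ} (hε : 0 < ε) (hμ : μ.re ≤ -(2 * ε)) :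
    ∃ C : ℝ, ∀ t : ℝ, 0 ≤ t →
      ‖NormedSpace.exp ((t : ℂ) • B) *ᵥ x‖ ≤ C * Real.exp (-(ε * t)) := by
  set N := B - μ • 1 with hN
  refine ⟨∑ j ∈ Finset.range k, ‖N ^ j *ᵥ x‖ / ε ^ j, fun t ht => ?_⟩
  rw [exp_mulVec_genEig B μ k x hx t, norm_smul]
  have habs : ‖Complex.exp ((t : ℂ) * μ)‖ = Real.exp (t * μ.re) := by
    rw [Complex.norm_exp]
    congr 1
    simp [Complex.mul_re]
  rw [habs]
  have hsum : ‖∑ j ∈ Finset.range k, ((t : ℂ) ^ j * ((j.factorial : ℂ))⁻¹) • (N ^ j *ᵥ x)‖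
      ≤ ∑ j ∈ Finset.range k, (t ^ j * ((j.factorial : ℝ))⁻¹) * ‖N ^ j *ᵥ x‖ := by
    refine le_trans (norm_sum_le _ _) (Finset.sum_le_sum fun j _ => ?_)
    rw [norm_smul]
    gcongr
    have : ((t : ℂ) ^ j * ((j.factorial : ℂ))⁻¹) = ((t ^ j * ((j.factorial : ℝ))⁻¹ : ℝ) : ℂ) := by
      push_cast; ring
    rw [this, Complex.norm_real, Real.norm_eq_abs, abs_of_nonneg (by positivity)]
  have hterm : ∀ j ∈ Finset.range k, (t ^ j * ((j.factorial : ℝ))⁻¹) * ‖N ^ j *ᵥ x‖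
      ≤ Real.exp (ε * t) * (‖N ^ j *ᵥ x‖ / ε ^ j) := by
    intro j _
    have h1 : (ε * t) ^ j * ((j.factorial : ℝ))⁻¹ ≤ Real.exp (ε * t) :=
      pow_div_factorial_le_exp (by positivity) j
    have h2 : t ^ j * ((j.factorial : ℝ))⁻¹ ≤ Real.exp (ε * t) / ε ^ j := by
      rw [le_div_iff₀ (by positivity)]
      calc t ^ j * ((j.factorial : ℝ))⁻¹ * ε ^ j
          = (ε * t) ^ j * ((j.factorial : ℝ))⁻¹ := by ring
        _ ≤ Real.exp (ε * t) := h1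
    calc (t ^ j * ((j.factorial : ℝ))⁻¹) * ‖N ^ j *ᵥ x‖
        ≤ (Real.exp (ε * t) / ε ^ j) * ‖N ^ j *ᵥ x‖ := by gcongr
      _ = Real.exp (ε * t) * (‖N ^ j *ᵥ x‖ / ε ^ j) := by ring
  calc Real.exp (t * μ.re) * ‖∑ j ∈ Finset.range k, ((t : ℂ) ^ j * ((j.factorial : ℂ))⁻¹) • (N ^ j *ᵥ x)‖
      ≤ Real.exp (t * μ.re) * ∑ j ∈ Finset.range k, (t ^ j * ((j.factorial : ℝ))⁻¹) * ‖N ^ j *ᵥ x‖ :=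
        mul_le_mul_of_nonneg_left hsum (Real.exp_nonneg _)
    _ ≤ Real.exp (t * μ.re) * ∑ j ∈ Finset.range k, Real.exp (ε * t) * (‖N ^ j *ᵥ x‖ / ε ^ j) :=
        mul_le_mul_of_nonneg_left (Finset.sum_le_sum hterm) (Real.exp_nonneg _)
    _ = Real.exp (t * μ.re) * Real.exp (ε * t) * ∑ j ∈ Finset.range k, ‖N ^ j *ᵥ x‖ / ε ^ j := by
        rw [← Finset.mul_sum]; ring
    _ ≤ Real.exp (-(2 * ε) * t) * Real.exp (ε * t) * ∑ j ∈ Finset.range k, ‖N ^ j *ᵥ x‖ / ε ^ j := by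
        refine mul_le_mul_of_nonneg_right (mul_le_mul_of_nonneg_right ?_ (Real.exp_nonneg _))
          (Finset.sum_nonneg fun j _ => by positivity)
        exact Real.exp_le_exp.2 (by nlinarith)
    _ = (∑ j ∈ Finset.range k, ‖N ^ j *ᵥ x‖ / ε ^ j) * Real.exp (-(ε * t)) := by
        rw [mul_comm (Real.exp (-(2 * ε) * t) * Real.exp (ε * t)), ← Real.exp_add]
        congr 2
        ring

lemma decay_all {n : ℕ} (A : Matrix (Fin n) (Fin n) ℝ)
    (hA : ∀ w : ℂ, ((A.map (algebraMap ℝ ℂ)).charpoly).IsRoot w → 0 < w.re) :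
    ∃ ε : ℝ, 0 < ε ∧ ∀ x : Fin n → ℂ, ∃ C : ℝ, ∀ t : ℝ, 0 ≤ t →
      ‖NormedSpace.exp ((t : ℂ) • (-(A.map (algebraMap ℝ ℂ)))) *ᵥ x‖
        ≤ C * Real.exp (-(ε * t)) := by
  set Ac := A.map (algebraMap ℝ ℂ) with hAc
  rcases Nat.eq_zero_or_pos n with hn | hn
  · subst hn
    refine ⟨1, one_pos, fun x => ⟨0, fun t ht => ?_⟩⟩
    have hz : NormedSpace.exp ((t : ℂ) • (-Ac)) *ᵥ x = 0 := Subsingleton.elim _ _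
    simp [hz]
  -- roots of charpoly
  have hcp0 : Ac.charpoly ≠ 0 := (Ac.charpoly_monic).ne_zero
  have hcard : Ac.charpoly.roots.card = n := by
    have h := (Polynomial.splits_iff_card_roots.1 (IsAlgClosed.splits Ac.charpoly))
    rw [h, Matrix.charpoly_natDegree_eq_dim, Fintype.card_fin]
  have hr0 : Ac.charpoly.roots ≠ 0 := by
    intro h; rw [h] at hcard; simp at hcard; omega
  have hsne : (Ac.charpoly.roots.toFinset.image Complex.re).Nonempty := by
    obtain ⟨w, hw⟩ := Multiset.exists_mem_of_ne_zero hr0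
    exact ⟨w.re, Finset.mem_image.2 ⟨w, Multiset.mem_toFinset.2 hw, rfl⟩⟩
  set m := (Ac.charpoly.roots.toFinset.image Complex.re).min' hsne with hm
  have hmpos : 0 < m := by
    have hmem := (Ac.charpoly.roots.toFinset.image Complex.re).min'_mem hsne
    rw [← hm] at hmem
    rcases Finset.mem_image.1 hmem with ⟨w, hw, hwre⟩
    rw [Multiset.mem_toFinset] at hw
    rw [← hwre]
    exact hA w ((Polynomial.mem_roots hcp0).1 hw)
  refine ⟨m / 2, by linarith, ?_⟩
  -- the submodule of decaying vectors
  set Bc := -Ac with hBc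
  set S : Submodule ℂ (Fin n → ℂ) :=
    { carrier := {x | ∃ C : ℝ, ∀ t : ℝ, 0 ≤ t →
        ‖NormedSpace.exp ((t : ℂ) • Bc) *ᵥ x‖ ≤ C * Real.exp (-(m / 2 * t))}
      zero_mem' := ⟨0, fun t ht => by simp [Matrix.mulVec_zero]⟩
      add_mem' := by
        rintro x y ⟨C1, h1⟩ ⟨C2, h2⟩
        refine ⟨C1 + C2, fun t ht => ?_⟩
        rw [Matrix.mulVec_add]
        calc ‖NormedSpace.exp ((t : ℂ) • Bc) *ᵥ x + NormedSpace.exp ((t : ℂ) • Bc) *ᵥ y‖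
            ≤ ‖NormedSpace.exp ((t : ℂ) • Bc) *ᵥ x‖ + ‖NormedSpace.exp ((t : ℂ) • Bc) *ᵥ y‖ :=
              norm_add_le _ _
          _ ≤ C1 * Real.exp (-(m / 2 * t)) + C2 * Real.exp (-(m / 2 * t)) :=
              add_le_add (h1 t ht) (h2 t ht)
          _ = (C1 + C2) * Real.exp (-(m / 2 * t)) := by ring
      smul_mem' := by
        rintro c x ⟨C, h⟩
        refine ⟨‖c‖ * C, fun t ht => ?_⟩
        rw [Matrix.mulVec_smul, norm_smul, mul_assoc]
        exact mul_le_mul_of_nonneg_left (h t ht) (norm_nonneg c) }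
    with hS
  suffices htop : ∀ x : Fin n → ℂ, x ∈ S by exact fun x => htop x
  have hsub : ∀ μ : ℂ, Module.End.maxGenEigenspace (Matrix.toLin' Bc) μ ≤ S := by
    intro μ x hx
    rcases (Module.End.mem_maxGenEigenspace (Matrix.toLin' Bc) μ x).1 hx with ⟨k, hk⟩
    by_cases hx0 : x = 0
    · subst hx0; exact S.zero_mem
    -- μ is an eigenvalue of toLin' Bc, hence -μ is a root of charpoly Ac
    have heig : Module.End.HasEigenvalue (Matrix.toLin' Bc) μ := by
      apply Module.End.hasEigenvalue_of_hasGenEigenvalue (k := k)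
      rw [Module.End.hasGenEigenvalue_iff]
      intro hbot
      apply hx0
      have : x ∈ Module.End.genEigenspace (Matrix.toLin' Bc) μ k := by
        rw [Module.End.mem_genEigenspace]
        exact ⟨k, le_rfl, LinearMap.mem_ker.2 hk⟩
      rw [hbot] at this
      simpa using this
    have hspec : μ ∈ spectrum ℂ Bc := by
      rw [← AlgEquiv.spectrum_eq Matrix.toLinAlgEquiv' Bc]
      exact Module.End.hasEigenvalue_iff_mem_spectrum.1 heig
    have hspec' : -μ ∈ spectrum ℂ Ac := by
      rw [spectrum.mem_iff] at hspec ⊢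
      intro hu
      apply hspec
      have : algebraMap ℂ (Matrix (Fin n) (Fin n) ℂ) μ - Bc
          = -(algebraMap ℂ (Matrix (Fin n) (Fin n) ℂ) (-μ) - Ac) := by
        rw [hBc, map_neg]
        abel
      rw [this]
      exact hu.neg
    have hroot : Ac.charpoly.IsRoot (-μ) := isRoot_charpoly_of_mem_spectrum hspec'
    have hmle : m ≤ (-μ).re := by
      apply Finset.min'_le
      exact Finset.mem_image.2 ⟨-μ, Multiset.mem_toFinset.2 ((Polynomial.mem_roots hcp0).2 hroot), rfl⟩
    have hμre : μ.re ≤ -(2 * (m / 2)) := by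
      simp only [Complex.neg_re] at hmle
      linarith
    -- translate hk to matrices
    have hkM : ((Bc - μ • 1) ^ k) *ᵥ x = 0 := by
      have he : Matrix.toLin' ((Bc - μ • 1) ^ k)
          = (Matrix.toLin' Bc - μ • (1 : Module.End ℂ (Fin n → ℂ))) ^ k := by
        have h1 : Matrix.toLinAlgEquiv' ((Bc - μ • (1 : Matrix (Fin n) (Fin n) ℂ)) ^ k)
            = (Matrix.toLinAlgEquiv' Bc - μ • Matrix.toLinAlgEquiv' (1 : Matrix (Fin n) (Fin n) ℂ)) ^ k := by
          rw [map_pow, map_sub, _root_.map_smul]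
        rw [_root_.map_one] at h1
        exact h1.symm ▸ h1
      calc ((Bc - μ • 1) ^ k) *ᵥ x = Matrix.toLin' ((Bc - μ • 1) ^ k) x := (Matrix.toLin'_apply _ _).symm
        _ = ((Matrix.toLin' Bc - μ • (1 : Module.End ℂ (Fin n → ℂ))) ^ k) x := by rw [he]
        _ = 0 := hk
    rcases decay_genEig Bc μ k x hkM (by linarith : (0:ℝ) < m / 2) hμre with ⟨C, hC⟩
    exact ⟨C, hC⟩
  intro x
  have htop := Module.End.iSup_maxGenEigenspace_eq_top (Matrix.toLin' Bc)
  have : (⊤ : Submodule ℂ (Fin n → ℂ)) ≤ S := by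
    rw [← htop]
    exact iSup_le hsub
  exact this Submodule.mem_top

lemma exp_map_complex {n : ℕ} (M : Matrix (Fin n) (Fin n) ℝ) (t : ℝ) :
    (NormedSpace.exp (t • M)).map (algebraMap ℝ ℂ)
      = NormedSpace.exp ((t : ℂ) • M.map (algebraMap ℝ ℂ)) := by
  have hφ : Continuous ((algebraMap ℝ ℂ).mapMatrix :
      Matrix (Fin n) (Fin n) ℝ →+* Matrix (Fin n) (Fin n) ℂ) := by
    apply continuous_matrix
    intro i j
    exact Complex.continuous_ofReal.comp ((continuous_apply j).comp (continuous_apply i))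
  have h1 := NormedSpace.map_exp ((algebraMap ℝ ℂ).mapMatrix :
      Matrix (Fin n) (Fin n) ℝ →+* Matrix (Fin n) (Fin n) ℂ) hφ (t • M)
  have h2 : ((algebraMap ℝ ℂ).mapMatrix : Matrix (Fin n) (Fin n) ℝ →+* Matrix (Fin n) (Fin n) ℂ)
      (t • M) = (t : ℂ) • M.map (algebraMap ℝ ℂ) := by
    ext i j
    simp [RingHom.mapMatrix_apply, Matrix.map_apply, Complex.ofReal_mul]
  rw [h2] at h1
  calc (NormedSpace.exp (t • M)).map (algebraMap ℝ ℂ)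
      = (algebraMap ℝ ℂ).mapMatrix (NormedSpace.exp (t • M)) := rfl
    _ = NormedSpace.exp ((t : ℂ) • M.map (algebraMap ℝ ℂ)) := h1
    _ = NormedSpace.exp ((t : ℂ) • M.map (algebraMap ℝ ℂ)) :=
        rfl

lemma decay_real {n : ℕ} (A : Matrix (Fin n) (Fin n) ℝ)
    (hA : ∀ w : ℂ, ((A.map (algebraMap ℝ ℂ)).charpoly).IsRoot w → 0 < w.re) :
    ∃ ε : ℝ, 0 < ε ∧ ∀ u w : Fin n → ℝ, ∃ C : ℝ, ∀ t : ℝ, 0 ≤ t →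
      |u ⬝ᵥ (NormedSpace.exp (t • (-A)) *ᵥ w)| ≤ C * Real.exp (-(ε * t)) := by
  obtain ⟨ε, hε, hdec⟩ := decay_all A hA
  refine ⟨ε, hε, fun u w => ?_⟩
  obtain ⟨C, hC⟩ := hdec (fun i => (w i : ℂ))
  refine ⟨(∑ i, |u i|) * C, fun t ht => ?_⟩
  have hmapneg : ((-A).map (algebraMap ℝ ℂ)) = -(A.map (algebraMap ℝ ℂ)) := by
    ext i j; simp [Matrix.map_apply]
  have hvec : ∀ i, (((NormedSpace.exp (t • (-A)) *ᵥ w) i : ℝ) : ℂ)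
      = (NormedSpace.exp ((t:ℂ) • (-(A.map (algebraMap ℝ ℂ)))) *ᵥ (fun i => (w i : ℂ))) i := by
    intro i
    have h2 := RingHom.map_mulVec (algebraMap ℝ ℂ) (NormedSpace.exp (t • (-A))) w i
    rw [exp_map_complex (-A) t, hmapneg] at h2
    rw [← Complex.coe_algebraMap, h2]
    rfl
  have key : ((u ⬝ᵥ (NormedSpace.exp (t • (-A)) *ᵥ w) : ℝ) : ℂ)
      = (fun i => (u i : ℂ)) ⬝ᵥ (NormedSpace.exp ((t:ℂ) • (-(A.map (algebraMap ℝ ℂ)))) *ᵥ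
          (fun i => (w i : ℂ))) := by
    simp only [dotProduct, Complex.ofReal_sum, Complex.ofReal_mul]
    refine Finset.sum_congr rfl fun i _ => ?_
    rw [hvec i]
  have hnorm : |u ⬝ᵥ (NormedSpace.exp (t • (-A)) *ᵥ w)|
      = ‖((u ⬝ᵥ (NormedSpace.exp (t • (-A)) *ᵥ w) : ℝ) : ℂ)‖ := by
    rw [Complex.norm_real, Real.norm_eq_abs]
  rw [hnorm, key]
  set v := NormedSpace.exp ((t:ℂ) • (-(A.map (algebraMap ℝ ℂ)))) *ᵥ (fun i => (w i : ℂ)) with hv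
  calc ‖(fun i => (u i : ℂ)) ⬝ᵥ v‖ ≤ ∑ i, ‖(u i : ℂ) * v i‖ := norm_sum_le _ _
    _ = ∑ i, |u i| * ‖v i‖ := by
        refine Finset.sum_congr rfl fun i _ => ?_
        rw [norm_mul, Complex.norm_real, Real.norm_eq_abs]
    _ ≤ ∑ i, |u i| * (C * Real.exp (-(ε * t))) := by
        refine Finset.sum_le_sum fun i _ => ?_
        refine mul_le_mul_of_nonneg_left ?_ (abs_nonneg _)
        exact le_trans (norm_le_pi_norm v i) (hC t ht)
    _ = (∑ i, |u i|) * C * Real.exp (-(ε * t)) := by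
        rw [← Finset.sum_mul]; ring
    _ = (∑ i, |u i|) * C * Real.exp (-(ε * t)) := rfl

lemma exp_real_smul_one {n : ℕ} (c : ℝ) :
    NormedSpace.exp (c • (1 : Matrix (Fin n) (Fin n) ℝ)) =
      Real.exp c • (1 : Matrix (Fin n) (Fin n) ℝ) := by
  erw [← Algebra.algebraMap_eq_smul_one, ← Algebra.algebraMap_eq_smul_one,
    ← map_exp (algebraMap ℝ (Matrix (Fin n) (Fin n) ℝ)) (continuous_algebraMap _ _),
    Real.exp_eq_exp_ℝ]

theorem stmt4' (n : ℕ) (V : Matrix (Fin n) (Fin n) ℝ)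
    (α b : Fin n → ℝ) (z : ℝ)
    (hV : ∀ w : ℂ, (((z • (1 : Matrix (Fin n) (Fin n) ℝ) + V).map
        (algebraMap ℝ ℂ)).charpoly).IsRoot w → 0 < w.re) :
    IsUnit (z • (1 : Matrix (Fin n) (Fin n) ℝ) + V) ∧
    ∫ τ in Set.Ioi (0:ℝ),
        Real.exp (-(z * τ)) * (α ⬝ᵥ (NormedSpace.exp ((-τ) • V) *ᵥ b)) =
      α ⬝ᵥ ((z • (1 : Matrix (Fin n) (Fin n) ℝ) + V)⁻¹ *ᵥ b) := by
  set A := z • (1 : Matrix (Fin n) (Fin n) ℝ) + V with hA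
  -- invertibility
  have hdet : IsUnit A.det := by
    rw [isUnit_iff_ne_zero]
    intro h0
    have hroot : (A.map (algebraMap ℝ ℂ)).charpoly.IsRoot 0 := by
      rw [Polynomial.IsRoot, eval_charpoly']
      have hd0 : (A.map (algebraMap ℝ ℂ)).det = 0 := by
        rw [← RingHom.mapMatrix_apply, ← RingHom.map_det, h0, map_zero]
      rw [map_zero, zero_sub, Matrix.det_neg, hd0, mul_zero]
    simpa using hV 0 hroot
  have hunit : IsUnit A := (Matrix.isUnit_iff_isUnit_det A).2 hdet
  refine ⟨hunit, ?_⟩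
  obtain ⟨ε, hε, hdecay⟩ := decay_real A hV
  set E : ℝ → Matrix (Fin n) (Fin n) ℝ := fun τ => NormedSpace.exp (τ • (-A)) with hE
  set g : ℝ → ℝ := fun τ => α ⬝ᵥ (E τ *ᵥ b) with hg
  set f : ℝ → ℝ := fun τ => -(α ⬝ᵥ ((A⁻¹ * E τ) *ᵥ b)) with hf
  -- rewrite the integrand
  have hint_eq : ∀ τ : ℝ, Real.exp (-(z * τ)) * (α ⬝ᵥ (NormedSpace.exp ((-τ) • V) *ᵥ b))
      = g τ := by
    intro τ
    have hsplit : τ • (-A) = (-(z * τ)) • (1 : Matrix (Fin n) (Fin n) ℝ) + (-τ) • V := by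
      rw [hA]; module
    have hcomm : Commute ((-(z * τ)) • (1 : Matrix (Fin n) (Fin n) ℝ)) ((-τ) • V) :=
      ((Commute.one_left _).smul_left _).smul_right _
    have : E τ = Real.exp (-(z * τ)) • NormedSpace.exp ((-τ) • V) := by
      rw [hE]
      show NormedSpace.exp (τ • (-A)) = _
      erw [hsplit, NormedSpace.exp_add_of_commute hcomm, exp_real_smul_one, smul_mul_assoc, one_mul]
      rfl
    rw [hg]
    show _ = α ⬝ᵥ (E τ *ᵥ b)
    rw [this, Matrix.smul_mulVec, dotProduct_smul, smul_eq_mul]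
  -- the linear functionals
  set L : Matrix (Fin n) (Fin n) ℝ →L[ℝ] ℝ := LinearMap.toContinuousLinearMap
    { toFun := fun M => -(α ⬝ᵥ ((A⁻¹ * M) *ᵥ b))
      map_add' := fun M N => by
        show -(α ⬝ᵥ ((A⁻¹ * (M + N)) *ᵥ b)) = -(α ⬝ᵥ ((A⁻¹ * M) *ᵥ b)) + -(α ⬝ᵥ ((A⁻¹ * N) *ᵥ b))
        rw [mul_add, Matrix.add_mulVec, dotProduct_add, neg_add]
      map_smul' := fun c M => by
        show -(α ⬝ᵥ ((A⁻¹ * (c • M)) *ᵥ b)) = (RingHom.id ℝ) c • -(α ⬝ᵥ ((A⁻¹ * M) *ᵥ b))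
        rw [mul_smul_comm, Matrix.smul_mulVec, dotProduct_smul, smul_eq_mul,
          RingHom.id_apply, smul_eq_mul]
        ring } with hL
  set L2 : Matrix (Fin n) (Fin n) ℝ →L[ℝ] ℝ := LinearMap.toContinuousLinearMap
    { toFun := fun M => α ⬝ᵥ (M *ᵥ b)
      map_add' := fun M N => by
        show α ⬝ᵥ ((M + N) *ᵥ b) = α ⬝ᵥ (M *ᵥ b) + α ⬝ᵥ (N *ᵥ b)
        rw [Matrix.add_mulVec, dotProduct_add]
      map_smul' := fun c M => by
        show α ⬝ᵥ ((c • M) *ᵥ b) = (RingHom.id ℝ) c • (α ⬝ᵥ (M *ᵥ b))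
        rw [Matrix.smul_mulVec, dotProduct_smul, smul_eq_mul, RingHom.id_apply,
          smul_eq_mul] } with hL2
  have hEcont : Continuous E := by
    rw [hE]
    exact NormedSpace.exp_continuous.comp (continuous_id.smul continuous_const)
  -- derivative
  have hfderiv : ∀ τ : ℝ, HasDerivAt f (g τ) τ := by
    intro τ
    have hDE : HasDerivAt (fun u : ℝ => NormedSpace.exp (u • (-A)))
        (NormedSpace.exp (τ • (-A)) * (-A)) τ := hasDerivAt_exp_smul_const (-A) τ
    have hcomp := (L.hasFDerivAt (x := E τ)).comp_hasDerivAt τ hDE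
    have hval : L (NormedSpace.exp (τ • (-A)) * (-A)) = g τ := by
      have hc : Commute A (E τ) := ((Commute.refl A).neg_right.smul_right τ).exp_right
      have hkey : A⁻¹ * (E τ * (-A)) = -(E τ) := by
        rw [mul_neg, mul_neg, ← hc.eq, ← mul_assoc, Matrix.nonsing_inv_mul A hdet, one_mul]
      show -(α ⬝ᵥ ((A⁻¹ * (E τ * (-A))) *ᵥ b)) = g τ
      rw [hkey, Matrix.neg_mulVec, dotProduct_neg, neg_neg]
    erw [hval] at hcomp
    exact hcomp
  -- tendsto 0
  have hf_eq : ∀ τ : ℝ, f τ = -((α ᵥ* A⁻¹) ⬝ᵥ (E τ *ᵥ b)) := by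
    intro τ
    rw [hf]
    show -(α ⬝ᵥ ((A⁻¹ * E τ) *ᵥ b)) = _
    rw [← Matrix.mulVec_mulVec, dotProduct_mulVec]
  have htends : Filter.Tendsto f Filter.atTop (nhds 0) := by
    obtain ⟨C, hC⟩ := hdecay (α ᵥ* A⁻¹) b
    have hbnd : ∀ᶠ τ in Filter.atTop, ‖f τ‖ ≤ C * Real.exp (-(ε * τ)) := by
      rw [Filter.eventually_atTop]
      refine ⟨0, fun τ hτ => ?_⟩
      rw [hf_eq τ, norm_neg, Real.norm_eq_abs]
      exact hC τ hτ
    have hlim : Filter.Tendsto (fun τ => C * Real.exp (-(ε * τ))) Filter.atTop (nhds 0) := by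
      have h1 : Filter.Tendsto (fun τ : ℝ => ε * τ) Filter.atTop Filter.atTop :=
        Filter.Tendsto.const_mul_atTop hε Filter.tendsto_id
      have h2 : Filter.Tendsto (fun τ : ℝ => Real.exp (-(ε * τ))) Filter.atTop (nhds 0) :=
        Real.tendsto_exp_neg_atTop_nhds_zero.comp h1
      simpa using h2.const_mul C
    exact squeeze_zero_norm' hbnd hlim
  -- integrability
  have hgint : MeasureTheory.IntegrableOn g (Set.Ioi (0:ℝ)) := by
    obtain ⟨C, hC⟩ := hdecay α b
    have hgc : Continuous g := by
      have : g = fun τ => L2 (E τ) := by funext τ; rfl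
      rw [this]
      exact L2.continuous.comp hEcont
    have hmaj : MeasureTheory.IntegrableOn (fun τ => C * Real.exp (-(ε * τ))) (Set.Ioi (0:ℝ)) := by
      have := (exp_neg_integrableOn_Ioi 0 hε).const_mul C
      simp only [neg_mul] at this; exact this
    refine MeasureTheory.Integrable.mono' hmaj hgc.aestronglyMeasurable ?_
    rw [MeasureTheory.ae_restrict_iff' measurableSet_Ioi]
    refine MeasureTheory.ae_of_all _ fun τ hτ => ?_
    rw [Real.norm_eq_abs]
    exact hC τ (le_of_lt hτ)
  -- FTC
  have hFTC := MeasureTheory.integral_Ioi_of_hasDerivAt_of_tendsto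
    (hfderiv 0).continuousAt.continuousWithinAt (fun x _ => hfderiv x) hgint htends
  have hf0 : f 0 = -(α ⬝ᵥ (A⁻¹ *ᵥ b)) := by
    rw [hf]
    show -(α ⬝ᵥ ((A⁻¹ * E 0) *ᵥ b)) = _
    have hE0 : E 0 = 1 := by
      show NormedSpace.exp ((0:ℝ) • (-A)) = 1
      rw [zero_smul, NormedSpace.exp_zero]
    rw [hE0, mul_one]
  calc ∫ τ in Set.Ioi (0:ℝ), Real.exp (-(z * τ)) * (α ⬝ᵥ (NormedSpace.exp ((-τ) • V) *ᵥ b))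
      = ∫ τ in Set.Ioi (0:ℝ), g τ := by simp only [hint_eq]
    _ = 0 - f 0 := hFTC
    _ = α ⬝ᵥ (A⁻¹ *ᵥ b) := by rw [hf0]; ring

end Stmt4Aux

/-- Laplace transform of the age-of-infection kernel `a(τ) = α·exp(−τV)·b`:
if every complex eigenvalue of `z·I + V` has strictly positive real part, then
`z·I + V` is invertible and `∫_0^∞ e^{−zτ} a(τ) dτ = α·(zI+V)⁻¹·b`. -/
theorem stmt4 (n : ℕ) (V : Matrix (Fin n) (Fin n) ℝ)
    (α b : Fin n → ℝ) (z : ℝ)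
    (hV : ∀ w : ℂ, (((z • (1 : Matrix (Fin n) (Fin n) ℝ) + V).map
        (algebraMap ℝ ℂ)).charpoly).IsRoot w → 0 < w.re) :
    IsUnit (z • (1 : Matrix (Fin n) (Fin n) ℝ) + V) ∧
    ∫ τ in Set.Ioi (0:ℝ),
        Real.exp (-(z * τ)) * (α ⬝ᵥ (NormedSpace.exp ((-τ) • V) *ᵥ b)) =
      α ⬝ᵥ ((z • (1 : Matrix (Fin n) (Fin n) ℝ) + V)⁻¹ *ᵥ b) :=
  stmt4' n V α b z hV
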